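/- Let V be a finite set, J and H multigraphs on V, k an integer, R ⊆ V, and T a nonempty proper subset of V\R (so (V\R)\T ≠ ∅). Assume: (a) if d_H(T, (V\R)\T) ≥ 1 then d_J(T, (V\R)\T) ≥ ⌈(k−3)/2⌉; (b) d_J(T) ≥ k − 2·d_H(T) − 2 and d_J((V\R)\T) ≥ k − 2·d_H((V\R)\T) − 2; (c) d_J(R) ≤ k − 2·d_H(R) + 2. Then 2·d_J(T, (V\R)\T) ≥ k − 6, i.e., d_J(T, (V\R)\T) ≥ ⌈(k−6)/2⌉. -/
import Mathlib


open Finset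

variable {V : Type*} [Fintype V] [DecidableEq V]

/-- `d_m(S,T)`: total multiplicity of edges of the multigraph `m` with one end in `S` and
the other in `T` (for disjoint `S`, `T`). -/
def dBetween (m : V → V → ℕ) (S T : Finset V) : ℕ := ∑ u ∈ S, ∑ v ∈ T, m u v

/-- `d_m(S) = d_m(S, V \ S)`. -/
def degS (m : V → V → ℕ) (S : Finset V) : ℕ := dBetween m S Sᶜ

lemma dBetween_union_right (m : V → V → ℕ) (S A B : Finset V) (h : Disjoint A B) :
    dBetween m S (A ∪ B) = dBetween m S A + dBetween m S B := by
  unfold dBetween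
  rw [← Finset.sum_add_distrib]
  exact Finset.sum_congr rfl fun u _ => Finset.sum_union h

lemma dBetween_comm (m : V → V → ℕ) (hs : ∀ a b, m a b = m b a) (A B : Finset V) :
    dBetween m A B = dBetween m B A := by
  unfold dBetween
  rw [Finset.sum_comm]
  exact Finset.sum_congr rfl fun v _ => Finset.sum_congr rfl fun u _ => hs u v

lemma degS_split (m : V → V → ℕ) (hs : ∀ a b, m a b = m b a) (R T : Finset V)
    (hTR : T ⊆ Rᶜ) :
    degS m T + degS m (Rᶜ \ T) = degS m R + 2 * dBetween m T (Rᶜ \ T) := by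
  have hT : ∀ a, a ∈ T → a ∉ R := fun a ha => Finset.mem_compl.mp (hTR ha)
  have h1 : Tᶜ = R ∪ (Rᶜ \ T) := by
    ext a
    simp only [Finset.mem_compl, Finset.mem_union, Finset.mem_sdiff]
    constructor
    · intro h
      by_cases hr : a ∈ R
      · exact Or.inl hr
      · exact Or.inr ⟨hr, h⟩
    · rintro (h | ⟨_, h⟩)
      · exact fun ht => hT a ht h
      · exact h
  have h2 : (Rᶜ \ T)ᶜ = R ∪ T := by
    ext a
    simp only [Finset.mem_compl, Finset.mem_sdiff, Finset.mem_union, not_and, not_not]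
    constructor
    · intro h
      by_cases hr : a ∈ R
      · exact Or.inl hr
      · exact Or.inr (h hr)
    · rintro (h | h)
      · intro hc; exact absurd h hc
      · intro _; exact h
  have hd1 : Disjoint R (Rᶜ \ T) :=
    Finset.disjoint_left.mpr fun a ha hb =>
      Finset.mem_compl.mp (Finset.mem_sdiff.mp hb).1 ha
  have hd2 : Disjoint R T := Finset.disjoint_left.mpr fun a ha hb => hT a hb ha
  have hd3 : Disjoint T (Rᶜ \ T) :=
    Finset.disjoint_left.mpr fun a ha hb => (Finset.mem_sdiff.mp hb).2 ha
  have hRc : Rᶜ = T ∪ (Rᶜ \ T) := (Finset.union_sdiff_of_subset hTR).symm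
  have e1 : degS m T = dBetween m T R + dBetween m T (Rᶜ \ T) := by
    rw [degS, h1, dBetween_union_right m T R (Rᶜ \ T) hd1]
  have e2 : degS m (Rᶜ \ T) = dBetween m (Rᶜ \ T) R + dBetween m (Rᶜ \ T) T := by
    rw [degS, h2, dBetween_union_right m (Rᶜ \ T) R T hd2]
  have e3 : degS m R = dBetween m R T + dBetween m R (Rᶜ \ T) := by
    rw [degS, hRc, dBetween_union_right m R T (Rᶜ \ T) hd3,
      Finset.union_sdiff_cancel_left hd3]
  have c1 := dBetween_comm m hs T R
  have c2 := dBetween_comm m hs (Rᶜ \ T) R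
  have c3 := dBetween_comm m hs (Rᶜ \ T) T
  omega

/-- Lemma 3.5: for a contracted set `R` and a nonempty proper subset `T` of `V \ R`,
`d_J(T, (V \ R) \ T) ≥ ⌈(k-6)/2⌉`. -/
theorem edges_outside_contracted_set
    (J H : V → V → ℕ)
    (hJsymm : ∀ a b, J a b = J b a) (hHsymm : ∀ a b, H a b = H b a)
    (k : ℤ) (R T : Finset V)
    (hTR : T ⊆ Rᶜ) (hTne : T.Nonempty) (hTprop : T ≠ Rᶜ)
    (ha : 1 ≤ dBetween H T (Rᶜ \ T) →
      ⌈((k : ℚ) - 3) / 2⌉ ≤ (dBetween J T (Rᶜ \ T) : ℤ))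
    (hb1 : k - 2 * (degS H T : ℤ) - 2 ≤ (degS J T : ℤ))
    (hb2 : k - 2 * (degS H (Rᶜ \ T) : ℤ) - 2 ≤ (degS J (Rᶜ \ T) : ℤ))
    (hc : (degS J R : ℤ) ≤ k - 2 * (degS H R : ℤ) + 2) :
    k - 6 ≤ 2 * (dBetween J T (Rᶜ \ T) : ℤ) ∧
      ⌈((k : ℚ) - 6) / 2⌉ ≤ (dBetween J T (Rᶜ \ T) : ℤ) := by
  have main : k - 6 ≤ 2 * (dBetween J T (Rᶜ \ T) : ℤ) := by
    by_cases h : 1 ≤ dBetween H T (Rᶜ \ T)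
    · have h1 := ha h
      have h2 : ((k : ℚ) - 3) / 2 ≤ (⌈((k : ℚ) - 3) / 2⌉ : ℚ) := Int.le_ceil _
      have h3 : (⌈((k : ℚ) - 3) / 2⌉ : ℚ) ≤ ((dBetween J T (Rᶜ \ T) : ℤ) : ℚ) := by
        exact_mod_cast h1
      have : ((k : ℚ) - 6) ≤ 2 * ((dBetween J T (Rᶜ \ T) : ℤ) : ℚ) := by linarith
      exact_mod_cast this
    · have hH0 : dBetween H T (Rᶜ \ T) = 0 := by omega
      have kJ := degS_split J hJsymm R T hTR
      have kH := degS_split H hHsymm R T hTR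
      rw [hH0] at kH
      omega
  refine ⟨main, ?_⟩
  rw [Int.ceil_le]
  have main' : (k : ℚ) - 6 ≤ 2 * ((dBetween J T (Rᶜ \ T) : ℤ) : ℚ) := by exact_mod_cast main
  push_cast at main' ⊢
  linarith
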